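/- Under the direct sum decomposition dom J = H_har(λ) ⊕ ker J for λ ∉ σ(L_D), the singular trace form satisfies the representation formula Ě_λ[ψ] = Ě[ψ] − λ (L_D(L_D − λ)⁻¹ Πψ, Πψ) for every ψ ∈ ran J, where Ě_λ[ψ] := E[P_λ u] − λ‖P_λ u‖² with Ju = ψ and P_λ u the H_har(λ)-component of u, Ě = Ě_0, and Π is the Poisson operator Π(Ju) = Pu. -/

import Mathlib

/-- Representation formula for the singular trace form.  With
`P` the projection onto `H_har` along `ker J`, `R = (L_D - λ)⁻¹`
(weak formulation) and `P_λ u = Pu + λ R(Pu)` the `H_har(λ)`-component of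
`u`, one has, writing `Πψ = Pu` for `ψ = Ju` and using
`L_D(L_D-λ)⁻¹ = 1 + λ(L_D-λ)⁻¹`:
`Ě_λ[ψ] = E[P_λ u] - λ‖P_λ u‖² = Ě[ψ] - λ (Πψ + λ R Πψ, Πψ)`. -/
theorem stmt_8 {H Haux : Type*}
    [NormedAddCommGroup H] [InnerProductSpace ℝ H]
    [NormedAddCommGroup Haux] [InnerProductSpace ℝ Haux]
    (D : Submodule ℝ H)
    (E : H →ₗ[ℝ] H →ₗ[ℝ] ℝ)
    (hsymm : ∀ x y : H, E x y = E y x)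
    (hpos : ∀ v : D, 0 ≤ E (v : H) (v : H))
    (J : D →ₗ[ℝ] Haux)
    (lam : ℝ)
    (P : D → D)
    (hP : ∀ u : D, (∀ w : D, J w = 0 → E ((P u : D) : H) (w : H) = 0) ∧ J (u - P u) = 0)
    (huniq : ∀ u p : D, (∀ w : D, J w = 0 → E (p : H) (w : H) = 0) → J (u - p) = 0 →
      p = P u)
    (hlam : ¬ ∃ v : D, v ≠ 0 ∧ J v = 0 ∧
      ∀ w : D, J w = 0 → E (v : H) (w : H) = lam * (inner ℝ (v : H) (w : H) : ℝ))
    (R : D → D)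
    (hRker : ∀ f : D, J (R f) = 0)
    (hR : ∀ f w : D, J w = 0 →
      E ((R f : D) : H) (w : H) - lam * (inner ℝ ((R f : D) : H) (w : H) : ℝ)
        = (inner ℝ (f : H) (w : H) : ℝ)) :
    ∀ u : D,
      E ((P u + lam • R (P u) : D) : H) ((P u + lam • R (P u) : D) : H)
          - lam * ‖((P u + lam • R (P u) : D) : H)‖ ^ 2
        = E ((P u : D) : H) ((P u : D) : H)
          - lam * (inner ℝ (((P u : D) : H) + lam • ((R (P u) : D) : H)) ((P u : D) : H) : ℝ) := by
  intro u
  obtain ⟨hp1, -⟩ := hP u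
  set p : D := P u with hpdef
  set r : D := R p with hrdef
  have hr : J r = 0 := hRker p
  have h1 : E (p : H) (r : H) = 0 := hp1 r hr
  have h1' : E (r : H) (p : H) = 0 := by rw [hsymm]; exact h1
  have h2 : E (r : H) (r : H) - lam * (inner ℝ (r : H) (r : H) : ℝ)
      = (inner ℝ (p : H) (r : H) : ℝ) := hR p r hr
  have hc : ((p + lam • r : D) : H) = (p : H) + lam • (r : H) := by
    rfl
  rw [hc, ← real_inner_self_eq_norm_sq]
  simp only [map_add, map_smul, LinearMap.add_apply, LinearMap.smul_apply,
    inner_add_add_self, inner_add_left, inner_add_right, inner_smul_left, inner_smul_right, conj_trivial,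
    smul_eq_mul, real_inner_comm (r : H) (p : H)]
  have hcomm : (inner ℝ (p : H) (r : H) : ℝ) = inner ℝ (r : H) (p : H) := real_inner_comm _ _
  linear_combination lam * h1 + lam * h1' + lam ^ 2 * h2 + lam ^ 2 * hcomm
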